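/- Let p_0, p_i, p_j, k_i, k_j be integers with p_0 > 0, and ℓ_{ij} = lcm(p_i,p_j), g_{ij} = gcd(p_i,p_j). If k_i ℓ_{ij} ≡ k_j ℓ_{ij} (mod p_0), then k_i ≡ k_j (mod gcd(lcm(p_0,p_i)/p_i, lcm(p_0,p_j)/p_j)). -/

import Mathlib

lemma congruence_compat_aux (p₀ p q : ℕ) (hp : 0 < p) (n : ℤ)
    (h : (p₀ : ℤ) ∣ n * ((p : ℤ) * q)) :
    ((Nat.lcm p₀ p / p : ℕ) : ℤ) ∣ n * q := by
  have hp' : (p : ℤ) ∣ n * ((p : ℤ) * q) := ⟨n * q, by ring⟩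
  have hl : ((Nat.lcm p₀ p : ℕ) : ℤ) ∣ n * ((p : ℤ) * q) := by
    have := _root_.lcm_dvd h hp'
    simpa [← Int.coe_lcm, Int.lcm, Int.natAbs_natCast] using this
  have heq : (Nat.lcm p₀ p / p) * p = Nat.lcm p₀ p :=
    Nat.div_mul_cancel (Nat.dvd_lcm_right _ _)
  have hl2 : ((Nat.lcm p₀ p / p : ℕ) : ℤ) * (p : ℤ) ∣ (n * q) * (p : ℤ) := by
    rw [show ((Nat.lcm p₀ p / p : ℕ) : ℤ) * (p : ℤ) = ((Nat.lcm p₀ p : ℕ) : ℤ) by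
      exact_mod_cast heq]
    calc ((Nat.lcm p₀ p : ℕ) : ℤ) ∣ n * ((p : ℤ) * q) := hl
      _ = (n * q) * (p : ℤ) := by ring
  exact (mul_dvd_mul_iff_right (by exact_mod_cast hp.ne' : (p : ℤ) ≠ 0)).mp hl2

/-- If `kᵢ ℓᵢⱼ ≡ kⱼ ℓᵢⱼ (mod p₀)` where `ℓᵢⱼ = lcm(pᵢ,pⱼ)`, then
`kᵢ ≡ kⱼ (mod gcd(lcm(p₀,pᵢ)/pᵢ, lcm(p₀,pⱼ)/pⱼ))`. -/
theorem congruence_compatibility (p₀ pi pj : ℕ) (hp₀ : 0 < p₀) (hpi : 0 < pi)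
    (hpj : 0 < pj) (ki kj : ℤ)
    (h : (p₀ : ℤ) ∣ ki * (Nat.lcm pi pj : ℤ) - kj * (Nat.lcm pi pj : ℤ)) :
    ((Nat.gcd (Nat.lcm p₀ pi / pi) (Nat.lcm p₀ pj / pj) : ℤ)) ∣ ki - kj := by
  set n := ki - kj with hn
  have h' : (p₀ : ℤ) ∣ n * (Nat.lcm pi pj : ℤ) := by
    rw [hn, sub_mul]; exact h
  set g := Nat.gcd pi pj with hg
  have hg0 : 0 < g := Nat.gcd_pos_of_pos_left _ hpi
  have hLi : Nat.lcm pi pj = pi * (pj / g) := by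
    rw [Nat.lcm, Nat.mul_div_assoc pi (Nat.gcd_dvd_right pi pj)]
  have hLj : Nat.lcm pi pj = pj * (pi / g) := by
    rw [Nat.lcm_comm, Nat.lcm, Nat.gcd_comm,
      Nat.mul_div_assoc pj (Nat.gcd_dvd_left pi pj)]
  have hi : ((Nat.lcm p₀ pi / pi : ℕ) : ℤ) ∣ n * (pj / g : ℕ) := by
    apply congruence_compat_aux p₀ pi (pj / g) hpi n
    have : ((Nat.lcm pi pj : ℕ) : ℤ) = (pi : ℤ) * ((pj / g : ℕ) : ℤ) := by
      exact_mod_cast congrArg (Nat.cast : ℕ → ℤ) hLi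
    rwa [this] at h'
  have hj : ((Nat.lcm p₀ pj / pj : ℕ) : ℤ) ∣ n * (pi / g : ℕ) := by
    apply congruence_compat_aux p₀ pj (pi / g) hpj n
    have : ((Nat.lcm pi pj : ℕ) : ℤ) = (pj : ℤ) * ((pi / g : ℕ) : ℤ) := by
      exact_mod_cast congrArg (Nat.cast : ℕ → ℤ) hLj
    rwa [this] at h'
  have hGi : ((Nat.gcd (Nat.lcm p₀ pi / pi) (Nat.lcm p₀ pj / pj) : ℕ) : ℤ) ∣
      n * (pj / g : ℕ) :=
    dvd_trans (by exact_mod_cast Nat.gcd_dvd_left _ _) hi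
  have hGj : ((Nat.gcd (Nat.lcm p₀ pi / pi) (Nat.lcm p₀ pj / pj) : ℕ) : ℤ) ∣
      n * (pi / g : ℕ) :=
    dvd_trans (by exact_mod_cast Nat.gcd_dvd_right _ _) hj
  have hcop : Nat.Coprime (pi / g) (pj / g) := Nat.coprime_div_gcd_div_gcd hg0
  have hcopZ : IsCoprime ((pi / g : ℕ) : ℤ) ((pj / g : ℕ) : ℤ) :=
    Nat.isCoprime_iff_coprime.mpr hcop
  obtain ⟨u, v, huv⟩ := hcopZ
  have : n = u * (n * (pi / g : ℕ)) + v * (n * (pj / g : ℕ)) := by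
    linear_combination -n * huv
  rw [hn] at this ⊢
  rw [this]
  exact dvd_add (Dvd.dvd.mul_left hGj u) (Dvd.dvd.mul_left hGi v)
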